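/- Let d ≥ 1, let Ω ⊂ ℝ^d be a bounded, open, nonempty set, and let γ₁ < γ₂ be real numbers. Suppose (u_n) ⊂ L²_loc(Ω) and u ∈ L²_loc(Ω) satisfy: u_n → u in L²(K) for every compact subset K of Ω, and sup_n ∫_Ω d_{∂Ω}(x)^{γ₁} |u_n(x)|² dx < +∞. Then ∫_Ω d_{∂Ω}(x)^{γ₂} |u_n(x) − u(x)|² dx → 0 as n → +∞. -/

import Mathlib

open MeasureTheory Metric Filter
open scoped ENNReal

private lemma sq_sub_le (a b : ℝ) : (a - b) ^ 2 ≤ 2 * a ^ 2 + 2 * b ^ 2 := by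
  nlinarith [sq_nonneg (a + b)]

private lemma sq_le_two (a b : ℝ) : a ^ 2 ≤ 2 * (a - b) ^ 2 + 2 * b ^ 2 := by
  nlinarith [sq_nonneg (a - 2 * b)]

private lemma ofReal_two_mul (x : ℝ) : ENNReal.ofReal (2 * x) = 2 * ENNReal.ofReal x := by
  rw [ENNReal.ofReal_mul (by norm_num : (0:ℝ) ≤ 2)]
  norm_num

private lemma rpow_meas (γ : ℝ) : Measurable fun x : ℝ => x ^ γ := by measurability

/-- Weighted interpolation lemma: if `(u_n)` converges to `u` in `L²_loc(Ω)` and is bounded in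
the weighted space `L²(d_{∂Ω}^{γ₁}, Ω)`, then `u_n → u` in `L²(d_{∂Ω}^{γ₂}, Ω)` for any
`γ₂ > γ₁`. -/
theorem weighted_L2_convergence
    (d : ℕ) (hd : 1 ≤ d)
    (Ω : Set (EuclideanSpace ℝ (Fin d)))
    (hΩo : IsOpen Ω) (hΩb : Bornology.IsBounded Ω) (hΩne : Ω.Nonempty)
    (γ₁ γ₂ : ℝ) (hγ : γ₁ < γ₂)
    (u : ℕ → EuclideanSpace ℝ (Fin d) → ℝ) (v : EuclideanSpace ℝ (Fin d) → ℝ)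
    -- `(u n)` and `v` belong to `L²_loc(Ω)`
    (humeas : ∀ n, AEStronglyMeasurable (u n) (volume.restrict Ω))
    (hvmeas : AEStronglyMeasurable v (volume.restrict Ω))
    (huloc : ∀ n, ∀ K : Set (EuclideanSpace ℝ (Fin d)), K ⊆ Ω → IsCompact K →
      IntegrableOn (fun x => (u n x) ^ 2) K volume)
    (hvloc : ∀ K : Set (EuclideanSpace ℝ (Fin d)), K ⊆ Ω → IsCompact K →
      IntegrableOn (fun x => (v x) ^ 2) K volume)
    -- `u_n → v` in `L²(K)` for every compact `K ⊆ Ω`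
    (hconv : ∀ K : Set (EuclideanSpace ℝ (Fin d)), K ⊆ Ω → IsCompact K →
      Tendsto (fun n => ∫⁻ x in K, ENNReal.ofReal ((u n x - v x) ^ 2)) atTop (nhds 0))
    -- `sup_n ∫_Ω d_{∂Ω}^{γ₁} |u_n|² < ∞`
    (hbdd : ∃ M : ℝ, ∀ n,
      (∫⁻ x in Ω, ENNReal.ofReal (infDist x (frontier Ω) ^ γ₁ * (u n x) ^ 2)) ≤
        ENNReal.ofReal M) :
    Tendsto
      (fun n => ∫⁻ x in Ω, ENNReal.ofReal (infDist x (frontier Ω) ^ γ₂ * (u n x - v x) ^ 2))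
      atTop (nhds 0) := by
  classical
  obtain ⟨M, hM⟩ := hbdd
  set F := frontier Ω with hF
  -- frontier is nonempty
  have hFne : F.Nonempty := by
    rw [hF, nonempty_frontier_iff]
    refine ⟨hΩne, fun h => ?_⟩
    haveI : Nonempty (Fin d) := ⟨⟨0, hd⟩⟩
    obtain ⟨C, hC⟩ := isBounded_iff_forall_norm_le.1 hΩb
    obtain ⟨x, hx⟩ := NormedSpace.exists_lt_norm ℝ (EuclideanSpace ℝ (Fin d)) C
    exact absurd (hC x (h ▸ Set.mem_univ x)) (not_le.2 hx)
  have hFcl : IsClosed F := isClosed_frontier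
  have hδcont : Continuous fun x => infDist x F := continuous_infDist_pt F
  have hδpos : ∀ x ∈ Ω, 0 < infDist x F := by
    intro x hx
    refine (hFcl.notMem_iff_infDist_pos hFne).1 ?_
    rw [hF, hΩo.frontier_eq]
    exact fun h => h.2 hx
  -- upper bound for the distance
  obtain ⟨y₀, hy₀⟩ := hFne
  set R : ℝ := diam (closure Ω) with hR
  have hδR : ∀ x ∈ closure Ω, infDist x F ≤ R := fun x hx =>
    (infDist_le_dist_of_mem hy₀).trans
      (dist_le_diam_of_mem hΩb.closure hx (frontier_subset_closure hy₀))
  -- the compact exhaustion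
  set K : ℝ → Set (EuclideanSpace ℝ (Fin d)) :=
    fun ε => closure Ω ∩ {x | ε ≤ infDist x F} with hK
  have hKcl : ∀ ε, IsClosed (K ε) := fun ε =>
    isClosed_closure.inter (isClosed_le continuous_const hδcont)
  have hKcpt : ∀ ε, IsCompact (K ε) := fun ε =>
    Metric.isCompact_of_isClosed_isBounded (hKcl ε)
      (hΩb.closure.subset Set.inter_subset_left)
  have hKΩ : ∀ ε : ℝ, 0 < ε → K ε ⊆ Ω := by
    intro ε hε x hx
    obtain ⟨hx1, hx2⟩ := hx
    rw [closure_eq_self_union_frontier] at hx1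
    rcases hx1 with h | h
    · exact h
    · exact absurd (infDist_zero_of_mem (hF ▸ h)) (by simp only [Set.mem_setOf_eq] at hx2; nlinarith)
  have hUnion : (⋃ m : ℕ, K (1 / (m + 1))) = Ω := by
    apply Set.Subset.antisymm
    · exact Set.iUnion_subset fun m => hKΩ _ (by positivity)
    · intro x hx
      obtain ⟨m, hm⟩ := exists_nat_one_div_lt (hδpos x hx)
      exact Set.mem_iUnion.2 ⟨m, subset_closure hx, le_of_lt hm⟩
  have hKmono : Monotone fun m : ℕ => K (1 / (m + 1 : ℝ)) := by
    intro a b hab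
    refine Set.inter_subset_inter_right _ fun x hx => ?_
    simp only [Set.mem_setOf_eq] at hx ⊢
    refine le_trans (by gcongr <;> exact_mod_cast hab) hx
  -- uniform bound for powers of the distance on K ε
  have hCb : ∀ γ ε : ℝ, 0 < ε → ∀ x ∈ K ε, infDist x F ^ γ ≤ max (ε ^ γ) (R ^ γ) := by
    intro γ ε hε x hx
    have h1 : ε ≤ infDist x F := hx.2
    have h2 : infDist x F ≤ R := hδR x hx.1
    rcases le_or_gt 0 γ with hγ' | hγ'
    · exact le_max_of_le_right (Real.rpow_le_rpow (hε.le.trans h1) h2 hγ')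
    · exact le_max_of_le_left (Real.rpow_le_rpow_of_nonpos hε h1 hγ'.le)
  -- measurability
  have hδγm : ∀ γ : ℝ, Measurable fun x => infDist x F ^ γ := fun γ =>
    (rpow_meas γ).comp hδcont.measurable
  have hmeasU : ∀ n, AEMeasurable
      (fun x => ENNReal.ofReal (infDist x F ^ γ₁ * (u n x) ^ 2)) (volume.restrict Ω) :=
    fun n => ENNReal.measurable_ofReal.comp_aemeasurable
      (((hδγm γ₁).aemeasurable).mul ((humeas n).aemeasurable.pow aemeasurable_const))
  have hmeasUV : ∀ n, AEMeasurable
      (fun x => ENNReal.ofReal (infDist x F ^ γ₁ * (u n x - v x) ^ 2)) (volume.restrict Ω) :=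
    fun n => ENNReal.measurable_ofReal.comp_aemeasurable
      (((hδγm γ₁).aemeasurable).mul
        (((humeas n).aemeasurable.sub hvmeas.aemeasurable).pow aemeasurable_const))
  have hrestr : ∀ (f : EuclideanSpace ℝ (Fin d) → ℝ≥0∞),
      AEMeasurable f (volume.restrict Ω) → ∀ s, s ⊆ Ω → AEMeasurable f (volume.restrict s) := by
    intro f hf s hs
    have := hf.restrict (s := s)
    rwa [Measure.restrict_restrict_of_subset hs] at this
  -- bound for v on each K ε
  have hKbound : ∀ ε : ℝ, 0 < ε →
      (∫⁻ x in K ε, ENNReal.ofReal (infDist x F ^ γ₁ * v x ^ 2)) ≤ 2 * ENNReal.ofReal M := by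
    intro ε hε
    set C : ℝ := max (ε ^ γ₁) (R ^ γ₁) with hCdef
    have hC0 : 0 ≤ C := le_max_of_le_left (Real.rpow_nonneg hε.le γ₁)
    have hI := hconv (K ε) (hKΩ ε hε) (hKcpt ε)
    have htend : Tendsto (fun n =>
        2 * (ENNReal.ofReal C * ∫⁻ x in K ε, ENNReal.ofReal ((u n x - v x) ^ 2))
          + 2 * ENNReal.ofReal M) atTop (nhds (2 * ENNReal.ofReal M)) := by
      have h1 := ENNReal.Tendsto.const_mul (a := ENNReal.ofReal C) hI
        (Or.inr ENNReal.ofReal_ne_top)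
      have h2 := ENNReal.Tendsto.const_mul (a := (2:ℝ≥0∞)) h1
        (Or.inr (by norm_num : (2:ℝ≥0∞) ≠ ⊤))
      simpa using h2.add tendsto_const_nhds
    refine ge_of_tendsto' htend fun n => ?_
    have hstep1 : (∫⁻ x in K ε, ENNReal.ofReal (infDist x F ^ γ₁ * v x ^ 2)) ≤
        ∫⁻ x in K ε, (2 * ENNReal.ofReal (infDist x F ^ γ₁ * (u n x - v x) ^ 2)
          + 2 * ENNReal.ofReal (infDist x F ^ γ₁ * (u n x) ^ 2)) := by
      refine lintegral_mono fun x => ?_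
      have hd0 : 0 ≤ infDist x F ^ γ₁ := Real.rpow_nonneg infDist_nonneg γ₁
      have hv2 : v x ^ 2 ≤ 2 * (u n x - v x) ^ 2 + 2 * (u n x) ^ 2 := by
        nlinarith [sq_nonneg (2 * u n x - v x)]
      calc ENNReal.ofReal (infDist x F ^ γ₁ * v x ^ 2)
          ≤ ENNReal.ofReal (2 * (infDist x F ^ γ₁ * (u n x - v x) ^ 2)
              + 2 * (infDist x F ^ γ₁ * (u n x) ^ 2)) := by
            refine ENNReal.ofReal_le_ofReal ?_
            nlinarith [mul_le_mul_of_nonneg_left hv2 hd0]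
        _ = 2 * ENNReal.ofReal (infDist x F ^ γ₁ * (u n x - v x) ^ 2)
              + 2 * ENNReal.ofReal (infDist x F ^ γ₁ * (u n x) ^ 2) := by
            rw [ENNReal.ofReal_add
              (mul_nonneg (by norm_num) (mul_nonneg hd0 (sq_nonneg _)))
              (mul_nonneg (by norm_num) (mul_nonneg hd0 (sq_nonneg _))),
              ofReal_two_mul, ofReal_two_mul]
    have hstep2 : (∫⁻ x in K ε, (2 * ENNReal.ofReal (infDist x F ^ γ₁ * (u n x - v x) ^ 2)
          + 2 * ENNReal.ofReal (infDist x F ^ γ₁ * (u n x) ^ 2)))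
        = 2 * (∫⁻ x in K ε, ENNReal.ofReal (infDist x F ^ γ₁ * (u n x - v x) ^ 2))
          + 2 * (∫⁻ x in K ε, ENNReal.ofReal (infDist x F ^ γ₁ * (u n x) ^ 2)) := by
      rw [lintegral_add_left' ((hrestr _ (hmeasUV n) _ (hKΩ ε hε)).const_mul 2),
        lintegral_const_mul' 2 _ (by norm_num), lintegral_const_mul' 2 _ (by norm_num)]
    have hstep3 : (∫⁻ x in K ε, ENNReal.ofReal (infDist x F ^ γ₁ * (u n x - v x) ^ 2)) ≤
        ENNReal.ofReal C * ∫⁻ x in K ε, ENNReal.ofReal ((u n x - v x) ^ 2) := by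
      rw [← lintegral_const_mul' _ _ ENNReal.ofReal_ne_top]
      refine setLIntegral_mono' (hKcl ε).measurableSet fun x hx => ?_
      rw [← ENNReal.ofReal_mul hC0]
      exact ENNReal.ofReal_le_ofReal
        (mul_le_mul_of_nonneg_right (hCb γ₁ ε hε x hx) (sq_nonneg _))
    have hstep4 : (∫⁻ x in K ε, ENNReal.ofReal (infDist x F ^ γ₁ * (u n x) ^ 2)) ≤
        ENNReal.ofReal M :=
      (lintegral_mono_set (hKΩ ε hε)).trans (hM n)
    calc (∫⁻ x in K ε, ENNReal.ofReal (infDist x F ^ γ₁ * v x ^ 2))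
        ≤ _ := hstep1
      _ = _ := hstep2
      _ ≤ 2 * (ENNReal.ofReal C * ∫⁻ x in K ε, ENNReal.ofReal ((u n x - v x) ^ 2))
            + 2 * ENNReal.ofReal M := by gcongr
  -- bound for v on Ω
  have hB : (∫⁻ x in Ω, ENNReal.ofReal (infDist x F ^ γ₁ * v x ^ 2)) ≤ 2 * ENNReal.ofReal M := by
    rw [← hUnion, setLIntegral_iUnion_of_directed _ hKmono.directed_le]
    exact iSup_le fun m => hKbound _ (by positivity)
  -- uniform bound for u n - v on Ω
  have hA : ∀ n, (∫⁻ x in Ω, ENNReal.ofReal (infDist x F ^ γ₁ * (u n x - v x) ^ 2)) ≤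
      6 * ENNReal.ofReal M := by
    intro n
    have hstep1 : (∫⁻ x in Ω, ENNReal.ofReal (infDist x F ^ γ₁ * (u n x - v x) ^ 2)) ≤
        ∫⁻ x in Ω, (2 * ENNReal.ofReal (infDist x F ^ γ₁ * (u n x) ^ 2)
          + 2 * ENNReal.ofReal (infDist x F ^ γ₁ * v x ^ 2)) := by
      refine lintegral_mono fun x => ?_
      have hd0 : 0 ≤ infDist x F ^ γ₁ := Real.rpow_nonneg infDist_nonneg γ₁
      calc ENNReal.ofReal (infDist x F ^ γ₁ * (u n x - v x) ^ 2)
          ≤ ENNReal.ofReal (2 * (infDist x F ^ γ₁ * (u n x) ^ 2)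
              + 2 * (infDist x F ^ γ₁ * v x ^ 2)) := by
            refine ENNReal.ofReal_le_ofReal ?_
            have huv : (u n x - v x) ^ 2 ≤ 2 * (u n x) ^ 2 + 2 * v x ^ 2 := by
              nlinarith [sq_nonneg (u n x + v x)]
            nlinarith [mul_le_mul_of_nonneg_left huv hd0]
        _ = _ := by
            rw [ENNReal.ofReal_add
              (mul_nonneg (by norm_num) (mul_nonneg hd0 (sq_nonneg _)))
              (mul_nonneg (by norm_num) (mul_nonneg hd0 (sq_nonneg _))),
              ofReal_two_mul, ofReal_two_mul]
    have hstep2 : (∫⁻ x in Ω, (2 * ENNReal.ofReal (infDist x F ^ γ₁ * (u n x) ^ 2)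
          + 2 * ENNReal.ofReal (infDist x F ^ γ₁ * v x ^ 2)))
        = 2 * (∫⁻ x in Ω, ENNReal.ofReal (infDist x F ^ γ₁ * (u n x) ^ 2))
          + 2 * (∫⁻ x in Ω, ENNReal.ofReal (infDist x F ^ γ₁ * v x ^ 2)) := by
      rw [lintegral_add_left' ((hmeasU n).const_mul 2),
        lintegral_const_mul' 2 _ (by norm_num), lintegral_const_mul' 2 _ (by norm_num)]
    calc (∫⁻ x in Ω, ENNReal.ofReal (infDist x F ^ γ₁ * (u n x - v x) ^ 2))
        ≤ _ := hstep1
      _ = _ := hstep2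
      _ ≤ 2 * ENNReal.ofReal M + 2 * (2 * ENNReal.ofReal M) :=
          add_le_add (mul_le_mul_right (hM n) 2) (mul_le_mul_right hB 2)
      _ = 6 * ENNReal.ofReal M := by ring
  -- the main limsup estimate
  set T : ℕ → ℝ≥0∞ :=
    fun n => ∫⁻ x in Ω, ENNReal.ofReal (infDist x (frontier Ω) ^ γ₂ * (u n x - v x) ^ 2) with hT
  have hp : (0:ℝ) < γ₂ - γ₁ := by linarith
  have hmain : ∀ ε : ℝ, 0 < ε → limsup T atTop ≤
      ENNReal.ofReal (ε ^ (γ₂ - γ₁)) * (6 * ENNReal.ofReal M) := by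
    intro ε hε
    set Cε : ℝ := max (ε ^ γ₂) (R ^ γ₂) with hCε
    have hCε0 : 0 ≤ Cε := le_max_of_le_left (Real.rpow_nonneg hε.le γ₂)
    have hsplit : ∀ n, T n ≤
        ENNReal.ofReal Cε * (∫⁻ x in K ε, ENNReal.ofReal ((u n x - v x) ^ 2))
          + ENNReal.ofReal (ε ^ (γ₂ - γ₁)) * (6 * ENNReal.ofReal M) := by
      intro n
      have hTsplit : T n = (∫⁻ x in K ε, ENNReal.ofReal (infDist x F ^ γ₂ * (u n x - v x) ^ 2))
          + ∫⁻ x in Ω \ K ε, ENNReal.ofReal (infDist x F ^ γ₂ * (u n x - v x) ^ 2) := by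
        rw [hT, ← hF, ← lintegral_union (hΩo.measurableSet.diff (hKcl ε).measurableSet)
          disjoint_sdiff_self_right, Set.union_diff_cancel (hKΩ ε hε)]
      have h1 : (∫⁻ x in K ε, ENNReal.ofReal (infDist x F ^ γ₂ * (u n x - v x) ^ 2)) ≤
          ENNReal.ofReal Cε * ∫⁻ x in K ε, ENNReal.ofReal ((u n x - v x) ^ 2) := by
        rw [← lintegral_const_mul' _ _ ENNReal.ofReal_ne_top]
        refine setLIntegral_mono' (hKcl ε).measurableSet fun x hx => ?_
        rw [← ENNReal.ofReal_mul hCε0]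
        exact ENNReal.ofReal_le_ofReal
          (mul_le_mul_of_nonneg_right (hCb γ₂ ε hε x hx) (sq_nonneg _))
      have h2 : (∫⁻ x in Ω \ K ε, ENNReal.ofReal (infDist x F ^ γ₂ * (u n x - v x) ^ 2)) ≤
          ENNReal.ofReal (ε ^ (γ₂ - γ₁)) * (6 * ENNReal.ofReal M) := by
        have hpt : ∀ x ∈ Ω \ K ε,
            ENNReal.ofReal (infDist x F ^ γ₂ * (u n x - v x) ^ 2) ≤
              ENNReal.ofReal (ε ^ (γ₂ - γ₁)) *
                ENNReal.ofReal (infDist x F ^ γ₁ * (u n x - v x) ^ 2) := by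
          intro x hx
          have hxΩ : x ∈ Ω := hx.1
          have hxlt : infDist x F < ε := by
            by_contra h
            exact hx.2 ⟨subset_closure hxΩ, le_of_not_gt h⟩
          have hx0 : 0 < infDist x F := hδpos x hxΩ
          have hdecomp : infDist x F ^ γ₂ = infDist x F ^ (γ₂ - γ₁) * infDist x F ^ γ₁ := by
            rw [← Real.rpow_add hx0]; ring_nf
          have hle : infDist x F ^ (γ₂ - γ₁) ≤ ε ^ (γ₂ - γ₁) :=
            Real.rpow_le_rpow hx0.le hxlt.le hp.le
          rw [← ENNReal.ofReal_mul (Real.rpow_nonneg hε.le _)]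
          refine ENNReal.ofReal_le_ofReal ?_
          rw [hdecomp, mul_assoc]
          exact mul_le_mul_of_nonneg_right hle
            (mul_nonneg (Real.rpow_nonneg hx0.le _) (sq_nonneg _))
        calc (∫⁻ x in Ω \ K ε, ENNReal.ofReal (infDist x F ^ γ₂ * (u n x - v x) ^ 2))
            ≤ ∫⁻ x in Ω \ K ε, ENNReal.ofReal (ε ^ (γ₂ - γ₁)) *
                ENNReal.ofReal (infDist x F ^ γ₁ * (u n x - v x) ^ 2) :=
              setLIntegral_mono' (hΩo.measurableSet.diff (hKcl ε).measurableSet) hpt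
          _ = ENNReal.ofReal (ε ^ (γ₂ - γ₁)) *
                ∫⁻ x in Ω \ K ε, ENNReal.ofReal (infDist x F ^ γ₁ * (u n x - v x) ^ 2) :=
              lintegral_const_mul' _ _ ENNReal.ofReal_ne_top
          _ ≤ ENNReal.ofReal (ε ^ (γ₂ - γ₁)) * (6 * ENNReal.ofReal M) := by
              gcongr
              exact (lintegral_mono_set Set.diff_subset).trans (hA n)
      rw [hTsplit]
      exact add_le_add h1 h2
    have htendR : Tendsto (fun n =>
        ENNReal.ofReal Cε * (∫⁻ x in K ε, ENNReal.ofReal ((u n x - v x) ^ 2))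
          + ENNReal.ofReal (ε ^ (γ₂ - γ₁)) * (6 * ENNReal.ofReal M)) atTop
        (nhds (ENNReal.ofReal (ε ^ (γ₂ - γ₁)) * (6 * ENNReal.ofReal M))) := by
      have h1 := ENNReal.Tendsto.const_mul (a := ENNReal.ofReal Cε)
        (hconv (K ε) (hKΩ ε hε) (hKcpt ε)) (Or.inr ENNReal.ofReal_ne_top)
      simpa using h1.add tendsto_const_nhds
    calc limsup T atTop ≤ limsup (fun n =>
          ENNReal.ofReal Cε * (∫⁻ x in K ε, ENNReal.ofReal ((u n x - v x) ^ 2))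
            + ENNReal.ofReal (ε ^ (γ₂ - γ₁)) * (6 * ENNReal.ofReal M)) atTop :=
        limsup_le_limsup (Eventually.of_forall hsplit)
      _ = ENNReal.ofReal (ε ^ (γ₂ - γ₁)) * (6 * ENNReal.ofReal M) := htendR.limsup_eq
  -- conclude
  have hlimsup0 : limsup T atTop = 0 := by
    refine le_antisymm ?_ (zero_le)
    have h1 : Tendsto (fun k : ℕ => (1 / ((k:ℝ) + 1)) ^ (γ₂ - γ₁)) atTop (nhds 0) := by
      have h0 : Tendsto (fun k : ℕ => 1 / ((k:ℝ) + 1)) atTop (nhds 0) :=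
        tendsto_one_div_add_atTop_nhds_zero_nat
      have hc : ContinuousAt (fun x : ℝ => x ^ (γ₂ - γ₁)) 0 :=
        Real.continuousAt_rpow_const 0 _ (Or.inr hp.le)
      have := hc.tendsto.comp h0
      simpa [Real.zero_rpow hp.ne', Function.comp_def] using this
    have hg : Tendsto (fun k : ℕ =>
        ENNReal.ofReal ((1 / ((k:ℝ) + 1)) ^ (γ₂ - γ₁)) * (6 * ENNReal.ofReal M)) atTop
        (nhds 0) := by
      have h2 := ENNReal.tendsto_ofReal h1
      have h3 := ENNReal.Tendsto.mul_const (b := 6 * ENNReal.ofReal M) h2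
        (Or.inr (ENNReal.mul_ne_top (by norm_num) ENNReal.ofReal_ne_top))
      simpa using h3
    exact ge_of_tendsto' hg fun k => hmain _ (by positivity)
  have hliminf0 : liminf T atTop = 0 :=
    le_antisymm (hlimsup0 ▸ liminf_le_limsup) (zero_le)
  exact tendsto_of_liminf_eq_limsup hliminf0 hlimsup0
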